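/- A slab D = {x ∈ ℝ^d : |⟨x − a, v⟩| < 1} (v ≠ 0) satisfies δ^{(1)}_D(x, w) = δ^{(d−1)}_D(x, w) for all x ∈ D and all nonzero w ∈ ℝ^d, where δ^{(k)}_D(x,w) = sup over k-dimensional subspaces V containing w of dist(x, (x+V) ∩ ∂D), with the convention that the distance is +∞ when the intersection is empty. -/

import Mathlib

open scoped RealInnerProductSpace

open Set Module Submodule

lemma frontier_slab {d : ℕ} (a v : EuclideanSpace ℝ (Fin d)) (hv : v ≠ 0) :
    frontier {y : EuclideanSpace ℝ (Fin d) | |⟪y - a, v⟫| < 1}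
      = {y : EuclideanSpace ℝ (Fin d) | |⟪y - a, v⟫| = 1} := by
  have hvv : ⟪v, v⟫ ≠ 0 := inner_self_ne_zero.mpr hv
  set h : EuclideanSpace ℝ (Fin d) → ℝ := fun y => ⟪y - a, v⟫ with hh
  have hcont : Continuous h := (continuous_id.sub continuous_const).inner continuous_const
  have hsurj : Function.Surjective (innerSL ℝ v) := by
    intro r
    refine ⟨(r / ⟪v, v⟫) • v, ?_⟩
    show ⟪v, (r / ⟪v, v⟫) • v⟫ = r
    rw [real_inner_smul_right, div_mul_cancel₀ _ hvv]
  have hopen : IsOpenMap h := by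
    have h1 : IsOpenMap (innerSL ℝ v) := (innerSL ℝ v).isOpenMap hsurj
    have h2 : IsOpenMap (fun t : ℝ => t - ⟪a, v⟫) := (Homeomorph.subRight (⟪a, v⟫)).isOpenMap
    have : h = (fun t : ℝ => t - ⟪a, v⟫) ∘ (innerSL ℝ v) := by
      funext y
      show ⟪y - a, v⟫ = ⟪v, y⟫ - ⟪a, v⟫
      rw [inner_sub_left, real_inner_comm y v]
    rw [this]
    exact h2.comp h1
  have hset : {y : EuclideanSpace ℝ (Fin d) | |⟪y - a, v⟫| < 1} = h ⁻¹' (Ioo (-1) 1) := by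
    ext y; simp [hh, abs_lt, and_comm]
  rw [hset, ← hopen.preimage_frontier_eq_frontier_preimage hcont,
    frontier_Ioo (by norm_num : (-1:ℝ) < 1)]
  ext y
  simp only [mem_preimage, mem_insert_iff, mem_singleton_iff, mem_setOf_eq, hh]
  rw [abs_eq (by norm_num : (0:ℝ) ≤ 1)]
  tauto

lemma bound_aux {d : ℕ} (v w u : EuclideanSpace ℝ (Fin d)) (hw : w ≠ 0)
    (h : ⟪u, v⟫ = (⟪w, v⟫ / ‖w‖ ^ 2) * ⟪u, w⟫) :
    |⟪u, v⟫| * ‖w‖ ≤ |⟪w, v⟫| * ‖u‖ := by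
  have hw0 : (0:ℝ) < ‖w‖ := norm_pos_iff.mpr hw
  have hcs : |⟪u, w⟫| ≤ ‖u‖ * ‖w‖ := abs_real_inner_le_norm u w
  have habs : |⟪u, v⟫| = |⟪w, v⟫| / ‖w‖ ^ 2 * |⟪u, w⟫| := by
    rw [h, abs_mul, abs_div, abs_pow, abs_norm]
  rw [habs]
  rw [div_mul_eq_mul_div, div_mul_eq_mul_div, div_le_iff₀ (by positivity)]
  have h1 : (0:ℝ) ≤ |⟪w, v⟫| := abs_nonneg _
  nlinarith [mul_le_mul_of_nonneg_right (mul_le_mul_of_nonneg_left hcs h1) hw0.le]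

lemma exists_hyperplane {d : ℕ} (hd : 2 ≤ d) (v w : EuclideanSpace ℝ (Fin d)) (hw : w ≠ 0) :
    ∃ V : Submodule ℝ (EuclideanSpace ℝ (Fin d)), Module.finrank ℝ V = d - 1 ∧ w ∈ V ∧
      ∀ u ∈ V, |⟪u, v⟫| * ‖w‖ ≤ |⟪w, v⟫| * ‖u‖ := by
  have hw2 : (‖w‖:ℝ) ^ 2 ≠ 0 := pow_ne_zero 2 (norm_ne_zero_iff.mpr hw)
  have hfr : finrank ℝ (EuclideanSpace ℝ (Fin d)) = d := finrank_euclideanSpace_fin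
  set p : EuclideanSpace ℝ (Fin d) := v - (⟪w, v⟫ / ‖w‖ ^ 2) • w with hp
  have hkey : ∀ u : EuclideanSpace ℝ (Fin d), ⟪u, p⟫ = 0 →
      ⟪u, v⟫ = (⟪w, v⟫ / ‖w‖ ^ 2) * ⟪u, w⟫ := by
    intro u hu
    have : ⟪u, v⟫ - (⟪w, v⟫ / ‖w‖ ^ 2) * ⟪u, w⟫ = 0 := by
      rw [← real_inner_smul_right, ← inner_sub_right]; exact hu
    linarith
  by_cases hp0 : p = 0
  · have hne : (span ℝ {w})ᗮ ≠ ⊥ := by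
      intro hbot
      have := Submodule.finrank_add_finrank_orthogonal (𝕜 := ℝ) (span ℝ {w})
      rw [hbot, finrank_span_singleton hw, finrank_bot, hfr] at this
      omega
    obtain ⟨q, hqmem, hq0⟩ := Submodule.ne_bot_iff _ |>.mp hne
    refine ⟨(span ℝ {q})ᗮ, ?_, ?_, ?_⟩
    · have := Submodule.finrank_add_finrank_orthogonal (𝕜 := ℝ) (span ℝ {q})
      rw [finrank_span_singleton hq0, hfr] at this
      omega
    · rw [mem_orthogonal_singleton_iff_inner_right]
      have := (mem_orthogonal_singleton_iff_inner_right (𝕜 := ℝ)).mp hqmem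
      rw [real_inner_comm]; exact this
    · intro u _
      refine bound_aux v w u hw (hkey u ?_)
      rw [hp0, inner_zero_right]
  · refine ⟨(span ℝ {p})ᗮ, ?_, ?_, ?_⟩
    · have := Submodule.finrank_add_finrank_orthogonal (𝕜 := ℝ) (span ℝ {p})
      rw [finrank_span_singleton hp0, hfr] at this
      omega
    · rw [mem_orthogonal_singleton_iff_inner_right, hp, inner_sub_left,
        real_inner_smul_left, real_inner_self_eq_norm_sq, div_mul_cancel₀ _ hw2,
        real_inner_comm v w, sub_self]
    · intro u hu
      refine bound_aux v w u hw (hkey u ?_)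
      rw [real_inner_comm]
      exact (mem_orthogonal_singleton_iff_inner_right (𝕜 := ℝ)).mp hu


theorem stmt_16 (d : ℕ) (hd : 2 ≤ d) (a v : EuclideanSpace ℝ (Fin d)) (hv : v ≠ 0)
    (x : EuclideanSpace ℝ (Fin d))
    (hx : x ∈ {y : EuclideanSpace ℝ (Fin d) | |⟪y - a, v⟫| < 1})
    (w : EuclideanSpace ℝ (Fin d)) (hw : w ≠ 0) :
    (⨆ V ∈ {V : Submodule ℝ (EuclideanSpace ℝ (Fin d)) |
        Module.finrank ℝ V = 1 ∧ w ∈ V},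
      EMetric.infEdist x
        ({z : EuclideanSpace ℝ (Fin d) | ∃ u ∈ V, z = x + u} ∩
          frontier {y : EuclideanSpace ℝ (Fin d) | |⟪y - a, v⟫| < 1}))
    = ⨆ V ∈ {V : Submodule ℝ (EuclideanSpace ℝ (Fin d)) |
        Module.finrank ℝ V = d - 1 ∧ w ∈ V},
      EMetric.infEdist x
        ({z : EuclideanSpace ℝ (Fin d) | ∃ u ∈ V, z = x + u} ∩
          frontier {y : EuclideanSpace ℝ (Fin d) | |⟪y - a, v⟫| < 1}) := by
  classical
  set F := frontier {y : EuclideanSpace ℝ (Fin d) | |⟪y - a, v⟫| < 1} with hFdef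
  have hF : F = {y : EuclideanSpace ℝ (Fin d) | |⟪y - a, v⟫| = 1} := frontier_slab a v hv
  set c : ℝ := ⟪x - a, v⟫ with hcdef
  have hc1 : |c| < 1 := hx
  have hc2 := abs_lt.mp hc1
  have hinner : ∀ u : EuclideanSpace ℝ (Fin d), ⟪x + u - a, v⟫ = c + ⟪u, v⟫ := by
    intro u
    rw [hcdef, show x + u - a = (x - a) + u from by abel, inner_add_left]
  have hmem : ∀ (V : Submodule ℝ (EuclideanSpace ℝ (Fin d)))
      (z : EuclideanSpace ℝ (Fin d)),
      z ∈ ({z : EuclideanSpace ℝ (Fin d) | ∃ u ∈ V, z = x + u} ∩ F) ↔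
        ∃ u ∈ V, z = x + u ∧ |c + ⟪u, v⟫| = 1 := by
    intro V z
    simp only [Set.mem_inter_iff, Set.mem_setOf_eq, hF]
    constructor
    · rintro ⟨⟨u, hu, rfl⟩, h2⟩
      exact ⟨u, hu, rfl, by rwa [hinner] at h2⟩
    · rintro ⟨u, hu, rfl, h2⟩
      exact ⟨⟨u, hu, rfl⟩, by rwa [hinner]⟩
  have hLHS : (⨆ V ∈ {V : Submodule ℝ (EuclideanSpace ℝ (Fin d)) |
        Module.finrank ℝ V = 1 ∧ w ∈ V},
      EMetric.infEdist x ({z : EuclideanSpace ℝ (Fin d) | ∃ u ∈ V, z = x + u} ∩ F))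
      = EMetric.infEdist x
        ({z : EuclideanSpace ℝ (Fin d) | ∃ u ∈ span ℝ {w}, z = x + u} ∩ F) := by
    apply le_antisymm
    · refine iSup₂_le fun V hV => ?_
      obtain ⟨h1, h2⟩ := hV
      have hVeq : V = span ℝ {w} := by
        symm
        apply Submodule.eq_of_le_of_finrank_le
          ((Submodule.span_singleton_le_iff_mem w V).mpr h2)
        rw [h1, finrank_span_singleton hw]
      rw [hVeq]
    · exact le_iSup₂_of_le (span ℝ {w})
        ⟨finrank_span_singleton hw, Submodule.mem_span_singleton_self w⟩ le_rfl
  rw [hLHS]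
  apply le_antisymm
  · -- L ≤ RHS
    by_cases hs : ⟪w, v⟫ = 0
    · -- intersection with the line is empty; and a hyperplane in ker also gives ∅
      have hempty : ({z : EuclideanSpace ℝ (Fin d) | ∃ u ∈ span ℝ {w}, z = x + u} ∩ F) = ∅ := by
        rw [Set.eq_empty_iff_forall_notMem]
        intro z hz
        rw [hmem] at hz
        obtain ⟨u, hu, -, h2⟩ := hz
        obtain ⟨t, rfl⟩ := Submodule.mem_span_singleton.mp hu
        rw [real_inner_smul_left, hs, mul_zero, add_zero] at h2
        exact absurd h2 (ne_of_lt hc1)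
      rw [hempty, show EMetric.infEdist x (∅ : Set (EuclideanSpace ℝ (Fin d))) = ⊤ from EMetric.infEdist_empty]
      set φ : EuclideanSpace ℝ (Fin d) →ₗ[ℝ] ℝ := (innerSL ℝ v).toLinearMap with hφ
      set K : Submodule ℝ (EuclideanSpace ℝ (Fin d)) := LinearMap.ker φ with hK
      have hsurj : Function.Surjective φ := by
        intro r
        refine ⟨(r / ⟪v, v⟫) • v, ?_⟩
        have hvv : ⟪v, v⟫ ≠ 0 := inner_self_ne_zero.mpr hv
        show ⟪v, (r / ⟪v, v⟫) • v⟫ = r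
        rw [real_inner_smul_right, div_mul_cancel₀ _ hvv]
      have hKrank : finrank ℝ K = d - 1 := by
        have h1 := LinearMap.finrank_range_add_finrank_ker φ
        rw [LinearMap.range_eq_top.mpr hsurj, finrank_top, finrank_self,
          finrank_euclideanSpace_fin] at h1
        rw [hK]
        omega
      have hKw : w ∈ K := by
        rw [hK, LinearMap.mem_ker]
        show ⟪v, w⟫ = 0
        rw [real_inner_comm]; exact hs
      have hKempty : ({z : EuclideanSpace ℝ (Fin d) | ∃ u ∈ K, z = x + u} ∩ F) = ∅ := by
        rw [Set.eq_empty_iff_forall_notMem]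
        intro z hz
        rw [hmem] at hz
        obtain ⟨u, hu, -, h2⟩ := hz
        have h0 : ⟪v, u⟫ = 0 := LinearMap.mem_ker.mp hu
        rw [real_inner_comm] at h0
        rw [h0, add_zero] at h2
        exact absurd h2 (ne_of_lt hc1)
      refine le_iSup₂_of_le K ⟨hKrank, hKw⟩ ?_
      rw [hKempty, show EMetric.infEdist x (∅ : Set (EuclideanSpace ℝ (Fin d))) = ⊤ from EMetric.infEdist_empty]
    · obtain ⟨V, hVrank, hVw, hVbound⟩ := exists_hyperplane hd v w hw
      have hs' : (0:ℝ) < |⟪w, v⟫| := abs_pos.mpr hs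
      set σ : ℝ := if 0 ≤ c then 1 else -1 with hσ
      have hσ1 : |σ| = 1 := by rw [hσ]; split_ifs <;> norm_num
      have hσabs : |σ - c| = 1 - |c| := by
        rw [hσ]; split_ifs with h
        · rw [abs_of_nonneg (by linarith : (0:ℝ) ≤ 1 - c), abs_of_nonneg h]
        · rw [abs_of_nonpos (by linarith : (-1:ℝ) - c ≤ 0), abs_of_neg (lt_of_not_ge h)]; ring
      set t₀ : ℝ := (σ - c) / ⟪w, v⟫ with ht₀
      set r : ℝ := (1 - |c|) * ‖w‖ / |⟪w, v⟫| with hr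
      have hstep1 : EMetric.infEdist x
          ({z : EuclideanSpace ℝ (Fin d) | ∃ u ∈ span ℝ {w}, z = x + u} ∩ F)
          ≤ ENNReal.ofReal r := by
        have hz₀ : (x + t₀ • w) ∈
            ({z : EuclideanSpace ℝ (Fin d) | ∃ u ∈ span ℝ {w}, z = x + u} ∩ F) := by
          rw [hmem]
          refine ⟨t₀ • w, Submodule.mem_span_singleton.mpr ⟨t₀, rfl⟩, rfl, ?_⟩
          rw [real_inner_smul_left, ht₀, div_mul_cancel₀ _ hs]
          rw [show c + (σ - c) = σ from by ring]
          exact hσ1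
        refine le_trans (EMetric.infEdist_le_edist_of_mem hz₀) ?_
        rw [edist_dist, dist_eq_norm, show x - (x + t₀ • w) = -(t₀ • w) from by abel,
          norm_neg, norm_smul, Real.norm_eq_abs]
        apply le_of_eq
        congr 1
        rw [ht₀, abs_div, hσabs, hr]
        ring
      have hstep2 : ENNReal.ofReal r ≤ EMetric.infEdist x
          ({z : EuclideanSpace ℝ (Fin d) | ∃ u ∈ V, z = x + u} ∩ F) := by
        refine EMetric.le_infEdist.mpr ?_
        intro z hz
        rw [hmem] at hz
        obtain ⟨u, hu, rfl, habs⟩ := hz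
        have h1 : 1 - |c| ≤ |⟪u, v⟫| := by
          have := abs_add_le c ⟪u, v⟫
          rw [habs] at this
          linarith
        have h2 := hVbound u hu
        have h3 : r ≤ ‖u‖ := by
          rw [hr, div_le_iff₀ hs']
          nlinarith [norm_nonneg w, norm_nonneg u, abs_nonneg ⟪u, v⟫]
        calc ENNReal.ofReal r ≤ ENNReal.ofReal ‖u‖ := ENNReal.ofReal_le_ofReal h3
          _ = edist x (x + u) := by
              rw [edist_dist, dist_eq_norm, show x - (x + u) = -u from by abel, norm_neg]
      exact le_trans hstep1 (le_trans hstep2 (le_iSup₂_of_le V ⟨hVrank, hVw⟩ le_rfl))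
  · -- RHS ≤ L
    refine iSup₂_le fun V hV => ?_
    obtain ⟨-, h2⟩ := hV
    apply EMetric.infEdist_anti
    apply Set.inter_subset_inter_left
    rintro z ⟨u, hu, rfl⟩
    exact ⟨u, (Submodule.span_singleton_le_iff_mem w V).mpr h2 hu, rfl⟩
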